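/- If a connected graph G has a nonempty vertex subset S' with ω(G − S') ≥ |S'| + 1, then there exist a set-valued function H : V(G) → {{1},{0,2}} with |H⁻¹(1)| odd and a vertex x ∈ S' such that G^x has no H^x-factor; in particular G is not H-critical. -/

import Mathlib

open SimpleGraph


/-- `G^x`: the graph obtained from `G` by adding a new pendant vertex (`none`)
adjacent only to `x`. -/
def addPendant {V : Type*} (G : SimpleGraph V) (x : V) : SimpleGraph (Option V) where
  Adj a b := (∃ a' b', a = some a' ∧ b = some b' ∧ G.Adj a' b') ∨
    (a = some x ∧ b = none) ∨ (a = none ∧ b = some x)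
  symm := by
    constructor
    rintro a b (⟨a', b', rfl, rfl, h⟩ | ⟨rfl, rfl⟩ | ⟨rfl, rfl⟩)
    · exact Or.inl ⟨b', a', rfl, rfl, h.symm⟩
    · exact Or.inr (Or.inr ⟨rfl, rfl⟩)
    · exact Or.inr (Or.inl ⟨rfl, rfl⟩)
  loopless := by
    constructor
    rintro a (⟨a', b', rfl, hb, h⟩ | ⟨rfl, hb⟩ | ⟨rfl, hb⟩)
    · injection hb with hb; subst hb; exact G.irrefl h
    · cases hb
    · cases hb


lemma even_sum_inner {W : Type*} [Fintype W] [DecidableEq W] (F : SimpleGraph W)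
    [DecidableRel F.Adj] (s : Finset W) :
    Even (∑ v ∈ s, (F.neighborFinset v ∩ s).card) := by
  set P : Finset (W × W) := (s ×ˢ s).filter fun p => F.Adj p.1 p.2 with hP
  have hsum : ∑ v ∈ s, (F.neighborFinset v ∩ s).card = P.card := by
    rw [Finset.card_eq_sum_card_fiberwise (f := Prod.fst) (t := s)
      (fun p hp => (Finset.mem_product.mp (Finset.mem_filter.mp hp).1).1)]
    refine Finset.sum_congr rfl fun b hb => ?_
    apply Finset.card_bij (fun w _ => (b, w))
    · intro w hw
      simp only [Finset.mem_inter, mem_neighborFinset] at hw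
      simp only [hP, Finset.mem_filter, Finset.mem_product]
      exact ⟨⟨⟨hb, hw.2⟩, hw.1⟩, trivial⟩
    · intro w₁ _ w₂ _ he; exact (Prod.mk.injEq _ _ _ _).mp he |>.2
    · intro p hp
      simp only [hP, Finset.mem_filter, Finset.mem_product] at hp
      obtain ⟨⟨⟨h1, h2⟩, h3⟩, h4⟩ := hp
      refine ⟨p.2, ?_, ?_⟩
      · simp only [Finset.mem_inter, mem_neighborFinset]
        exact ⟨h4 ▸ h3, h2⟩
      · exact Prod.ext h4.symm rfl
  rw [hsum]
  have hz : ((P.card : ℕ) : ZMod 2) = 0 := by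
    rw [Finset.card_eq_sum_ones P]
    push_cast
    refine Finset.sum_involution (fun p _ => p.swap) (fun a _ => ?_) (fun a _ h => ?_)
      (fun a ha => ?_) (fun a _ => Prod.swap_swap a)
    · decide
    · intro he
      have : a.1 ≠ a.2 := by
        have := (Finset.mem_filter.mp ‹a ∈ P›).2
        exact F.ne_of_adj this
      exact this (congrArg Prod.fst he.symm)
    · simp only [hP, Finset.mem_filter, Finset.mem_product] at ha ⊢
      exact ⟨⟨ha.1.2, ha.1.1⟩, ha.2.symm⟩
  obtain ⟨m, hm⟩ := (ZMod.natCast_eq_zero_iff _ 2).mp hz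
  exact ⟨m, by omega⟩

lemma exists_crossing {W : Type*} [Fintype W] [DecidableEq W] (F : SimpleGraph W)
    [DecidableRel F.Adj] (s : Finset W) (hodd : Odd (∑ v ∈ s, F.degree v)) :
    ∃ v ∈ s, ∃ w, w ∉ s ∧ F.Adj v w := by
  by_contra hc
  push_neg at hc
  have hdeg : ∀ v ∈ s, F.degree v = (F.neighborFinset v ∩ s).card := by
    intro v hv
    unfold SimpleGraph.degree
    rw [Finset.inter_eq_left.mpr ?_]
    intro w hw
    by_contra hws
    exact hc v hv w hws ((mem_neighborFinset _ _ _).mp hw)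
  rw [Finset.sum_congr rfl hdeg] at hodd
  exact (Nat.not_even_iff_odd.mpr hodd) (even_sum_inner F s)

theorem stmt_15 {V : Type*} [Fintype V] (G : SimpleGraph V) (hconn : G.Connected)
    (S' : Set V) (hne : S'.Nonempty)
    (h : S'.ncard + 1 ≤ Nat.card (G.induce S'ᶜ).ConnectedComponent) :
    ∃ H : V → Set ℕ, (∀ v, H v = {1} ∨ H v = {0, 2}) ∧
      Odd (Nat.card {v : V | H v = {1}}) ∧
      ∃ x ∈ S', ¬ ∃ F : SimpleGraph (Option V), F ≤ addPendant G x ∧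
        ∀ v : Option V, Nat.card (F.neighborSet v) ∈ v.elim ({1} : Set ℕ) H := by
  classical
  set k := S'.ncard with hk
  have hkpos : 1 ≤ k := (Set.ncard_pos S'.toFinite).mpr hne
  -- choose k+1 distinct components of G - S'
  obtain ⟨K, hKinj⟩ : ∃ K : Fin (k+1) → (G.induce S'ᶜ).ConnectedComponent,
      Function.Injective K := by
    have hno : Nonempty (Fin (k+1) ↪ (G.induce S'ᶜ).ConnectedComponent) := by
      cases nonempty_fintype ((G.induce S'ᶜ).ConnectedComponent)
      refine Function.Embedding.nonempty_of_card_le ?_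
      simpa [Nat.card_eq_fintype_card] using h
    exact ⟨hno.some, hno.some.injective⟩
  choose t ht using fun i => (K i).exists_rep
  set tv : Fin (k+1) → V := fun i => ((t i : ↥(S'ᶜ)) : V) with htv
  have htvinj : Function.Injective tv := by
    intro i j hij
    apply hKinj
    rw [← ht i, ← ht j, Subtype.val_injective hij]
  set T : Set V := Set.range tv with hT
  have hTS : ∀ v ∈ T, v ∉ S' := by
    rintro v ⟨i, rfl⟩
    exact (t i).2
  set H : V → Set ℕ := fun v => if v ∈ S' ∪ T then ({1} : Set ℕ) else {0, 2} with hH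
  have hne01 : ({1} : Set ℕ) ≠ {0, 2} := by
    intro hcon
    have h0 : (0 : ℕ) ∈ ({0,2} : Set ℕ) := Or.inl rfl
    rw [← hcon] at h0
    simp at h0
  have hne01' : ({0, 2} : Set ℕ) ≠ {1} := fun hcon => hne01 hcon.symm
  have hHmem : {v : V | H v = {1}} = S' ∪ T := by
    ext v
    simp only [Set.mem_setOf_eq, hH]
    by_cases hv : v ∈ S' ∪ T
    · simp [hv]
    · simp [hv, hne01']
  have hdisj : Disjoint S' T := Set.disjoint_left.mpr fun {a} haS haT => hTS a haT haS
  refine ⟨H, fun v => ?_, ?_, hne.choose, hne.choose_spec, ?_⟩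
  · by_cases hv : v ∈ S' ∪ T
    · exact Or.inl (if_pos hv)
    · exact Or.inr (if_neg hv)
  · rw [hHmem, Nat.card_coe_set_eq,
      Set.ncard_union_eq hdisj S'.toFinite T.toFinite]
    have hTcard : T.ncard = k + 1 := by
      rw [hT, ← Nat.card_coe_set_eq, Nat.card_range_of_injective htvinj,
        Nat.card_eq_fintype_card, Fintype.card_fin]
    exact ⟨k, by omega⟩
  set x := hne.choose with hx
  have hxS : x ∈ S' := hne.choose_spec
  rintro ⟨F, hFle, hFdeg⟩
  -- basic degree facts
  have hcard_deg : ∀ a : Option V, Nat.card (F.neighborSet a) = F.degree a := by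
    intro a
    rw [Nat.card_eq_fintype_card]
    exact F.card_neighborSet_eq_degree a
  have hdeg1 : ∀ v : V, v ∈ S' ∪ T → F.degree (some v) = 1 := by
    intro v hv
    have := hFdeg (some v)
    simp only [Option.elim, hH, if_pos hv, Set.mem_singleton_iff] at this
    rw [← hcard_deg]; exact this
  have hdeg02 : ∀ v : V, v ∉ S' ∪ T → Even (F.degree (some v)) := by
    intro v hv
    have := hFdeg (some v)
    simp only [Option.elim, hH, if_neg hv] at this
    rcases this with h0 | h2
    · rw [← hcard_deg, h0]; exact Even.zero
    · rw [← hcard_deg, Set.mem_singleton_iff.mp h2]; exact even_two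
  have huniq : ∀ a : Option V, F.degree a = 1 →
      ∀ b c, F.Adj a b → F.Adj a c → b = c := by
    intro a hca b c hb hc
    have h1 : Nat.card (F.neighborSet a) = 1 := by rw [hcard_deg]; exact hca
    obtain ⟨y, hy⟩ := Nat.card_eq_one_iff_exists.mp h1
    have hb' := hy ⟨b, hb⟩
    have hc' := hy ⟨c, hc⟩
    exact congrArg Subtype.val (hb'.trans hc'.symm)
  have hdegnone : F.degree (none : Option V) = 1 := by
    have := hFdeg none
    simp only [Option.elim, Set.mem_singleton_iff] at this
    rw [← hcard_deg]; exact this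
  -- the pendant edge is in F
  have hxx' : F.Adj none (some x) := by
    have h1 : Nat.card (F.neighborSet (none : Option V)) = 1 := by
      rw [hcard_deg]; exact hdegnone
    obtain ⟨y, hy⟩ := Nat.card_eq_one_iff_exists.mp h1
    have hadj : F.Adj none (y : Option V) := y.2
    rcases hFle hadj with ⟨a', b', ha, _, _⟩ | ⟨ha, _⟩ | ⟨_, hb⟩
    · exact absurd ha (by simp)
    · exact absurd ha (by simp)
    · rw [← hb]; exact hadj
  -- component sets
  set C : Fin (k+1) → Set V := fun i => Subtype.val '' (K i).supp with hC
  have hCS : ∀ i, ∀ v ∈ C i, v ∉ S' := by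
    rintro i v ⟨w, _, rfl⟩
    exact w.2
  have hCdisj : ∀ i j : Fin (k+1), ∀ v, v ∈ C i → v ∈ C j → i = j := by
    rintro i j v ⟨w1, hw1, rfl⟩ ⟨w2, hw2, hw⟩
    have : w1 = w2 := Subtype.val_injective hw.symm
    subst this
    apply hKinj
    rw [← (ConnectedComponent.mem_supp_iff _ _).mp hw1,
      ← (ConnectedComponent.mem_supp_iff _ _).mp hw2]
  have htiC : ∀ i, tv i ∈ C i := by
    intro i
    exact ⟨t i, (ConnectedComponent.mem_supp_iff _ _).mpr (ht i), rfl⟩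
  -- for each i, find a crossing edge into S'
  have hcross : ∀ i : Fin (k+1), ∃ s ∈ S', ∃ c ∈ C i, F.Adj (some c) (some s) := by
    intro i
    set Cf : Finset (Option V) := ((some '' C i).toFinite).toFinset with hCf
    have hmemCf : ∀ a, a ∈ Cf ↔ a ∈ some '' C i := fun a => Set.Finite.mem_toFinset _
    have htiCf : some (tv i) ∈ Cf := (hmemCf _).mpr ⟨tv i, htiC i, rfl⟩
    have hodd : Odd (∑ a ∈ Cf, F.degree a) := by
      rw [← Finset.add_sum_erase _ _ htiCf, hdeg1 (tv i) (Or.inr ⟨i, rfl⟩)]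
      have heven : Even (∑ a ∈ Cf.erase (some (tv i)), F.degree a) := by
        refine Finset.even_sum _ fun a ha => ?_
        obtain ⟨hane, haCf⟩ := Finset.mem_erase.mp ha
        obtain ⟨v, hvC, rfl⟩ := (hmemCf _).mp haCf
        refine hdeg02 v ?_
        rintro (hvS | ⟨j, rfl⟩)
        · exact hCS i v hvC hvS
        · exact hane (by rw [hCdisj i j _ hvC (htiC j)])
      obtain ⟨m, hm⟩ := heven
      exact ⟨m, by omega⟩
    obtain ⟨a, haCf, w, hwCf, hadj⟩ := exists_crossing F Cf hodd
    obtain ⟨v, hvC, rfl⟩ := (hmemCf _).mp haCf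
    rcases hFle hadj with ⟨a', b', ha, hb, hG⟩ | ⟨hax, _⟩ | ⟨ha, _⟩
    · obtain rfl : v = a' := Option.some_injective V ha
      subst hb
      by_cases hbS : b' ∈ S'
      · exact ⟨b', hbS, v, hvC, hadj⟩
      · exfalso
        apply hwCf
        refine (hmemCf _).mpr ⟨b', ?_, rfl⟩
        obtain ⟨wv, hwv, rfl⟩ := hvC
        have hadj' : (G.induce S'ᶜ).Adj wv ⟨b', hbS⟩ := hG
        refine ⟨⟨b', hbS⟩, ?_, rfl⟩
        rw [ConnectedComponent.mem_supp_iff, ← (ConnectedComponent.mem_supp_iff _ _).mp hwv]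
        exact (ConnectedComponent.sound hadj'.symm.reachable)
    · exfalso
      obtain rfl : v = x := Option.some_injective V hax
      exact hCS i x hvC hxS
    · exact absurd ha (by simp)
  choose f hfS c hcC hfadj using hcross
  -- f avoids x
  have hfx : ∀ i, f i ≠ x := by
    intro i hfi
    have h1 : F.degree (some x) = 1 := hdeg1 x (Or.inl hxS)
    have hA : F.Adj (some x) (some (c i)) := by rw [← hfi]; exact (hfadj i).symm
    have := huniq (some x) h1 (some (c i)) none hA hxx'.symm
    cases this
  -- f is injective
  have hfinj : Function.Injective f := by
    intro i j hij
    have h1 : F.degree (some (f i)) = 1 := hdeg1 (f i) (Or.inl (hfS i))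
    have hB : F.Adj (some (f i)) (some (c j)) := by rw [hij]; exact (hfadj j).symm
    have := huniq (some (f i)) h1 (some (c i)) (some (c j)) (hfadj i).symm hB
    have hc : c i = c j := Option.some_injective V this
    exact hCdisj i j (c i) (hcC i) (hc ▸ hcC j)
  -- cardinality contradiction
  have hginj : Function.Injective (fun i : Fin (k+1) =>
      (⟨f i, hfS i, hfx i⟩ : ↥(S' \ {x}))) := by
    intro i j hij
    exact hfinj (Subtype.ext_iff.mp hij)
  have hle := Nat.card_le_card_of_injective _ hginj
  rw [Nat.card_eq_fintype_card, Fintype.card_fin, Nat.card_coe_set_eq,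
    Set.ncard_diff_singleton_of_mem hxS] at hle
  omega
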